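/- Determinism of reduction in the CPS fragment: in the symmetric data/codata calculus without μ-abstractions, the one-step reduction relation on closed well-typed commands is deterministic: if c ▷ c₁ and c ▷ c₂ then c₁ = c₂. -/

import Mathlib

namespace SymCalc

/-! Basic syntactic categories of the symmetric data/codata calculus (CPS fragment). -/

abbrev Var := String
abbrev TName := String
abbrev XName := String

inductive Polarity | dat | cod
deriving DecidableEq, Repr

inductive Orientation | prd | con
deriving DecidableEq, Repr

inductive Strategy | cbv | cbn
deriving DecidableEq, Repr

def Polarity.flip : Polarity → Polarity
  | .dat => .cod | .cod => .dat

def Orientation.flip : Orientation → Orientation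
  | .prd => .con | .con => .prd

def Strategy.flip : Strategy → Strategy
  | .cbv => .cbn | .cbn => .cbv

/-- `val p` : the orientation of the canonical xtors of a type of polarity `p`. -/
def Polarity.val : Polarity → Orientation
  | .dat => .prd | .cod => .con

/-- `cnt p` : the orientation of (co)pattern matches on a type of polarity `p`. -/
def Polarity.cnt : Polarity → Orientation
  | .dat => .con | .cod => .prd

/-- Typing contexts: each variable carries an orientation (producer/consumer) and a type name.
The head of the list is the innermost binding. -/
abbrev Ctx := List (Var × Orientation × TName)

/-- Erase the variable names of a context, keeping orientations and types. -/
def eraseCtx (Γ : Ctx) : List (Orientation × TName) := Γ.map (·.2)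

mutual
/-- Expressions `e ::= x | 𝒳σ | match_p T { 𝒳Δ ⇒ c; … }`. -/
inductive Expr : Type
  | var : Var → Expr
  | xtor : XName → List Expr → Expr
  | mtch : Polarity → TName → List (XName × Ctx × Cmd) → Expr
/-- Commands `c ::= e₁ ≫ e₂ | Done`. -/
inductive Cmd : Type
  | cut : Expr → Expr → Cmd
  | done : Cmd
end

/-! Substitution. -/

abbrev Env := List (Var × Expr)

/-- Remove the bindings shadowed by the bound variables `xs`. -/
def shadowV (xs : List Var) (m : Env) : Env :=
  m.filter (fun q => ¬ xs.contains q.1)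

mutual
/-- Substitute the (closed) expressions of `m` for free variables in an expression. -/
def substExpr (m : Env) : Expr → Expr
  | .var x => (m.lookup x).getD (.var x)
  | .xtor n σ => .xtor n (σ.attach.map (fun ⟨e, _⟩ => substExpr m e))
  | .mtch p T cases =>
      .mtch p T (cases.attach.map
        (fun ⟨cs, _⟩ => (cs.1, cs.2.1, substCmd (shadowV (cs.2.1.map (·.1)) m) cs.2.2)))
termination_by e => sizeOf e
decreasing_by
  · have h := List.sizeOf_lt_of_mem ‹e ∈ σ›
    simp only [Expr.xtor.sizeOf_spec]; omega
  · have h := List.sizeOf_lt_of_mem ‹cs ∈ cases›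
    obtain ⟨n', Δ', c'⟩ := cs
    simp only [Expr.mtch.sizeOf_spec, Prod.mk.sizeOf_spec] at h ⊢; omega
/-- Substitute the (closed) expressions of `m` for free variables in a command. -/
def substCmd (m : Env) : Cmd → Cmd
  | .cut e₁ e₂ => .cut (substExpr m e₁) (substExpr m e₂)
  | .done => .done
termination_by c => sizeOf c
decreasing_by
  · simp only [Cmd.cut.sizeOf_spec]; omega
  · simp only [Cmd.cut.sizeOf_spec]; omega
end

/-- Pair the variables of a context with the expressions of a substitution. -/
def bindArgs (Δ : Ctx) (σ : List Expr) : Env := List.zip (Δ.map (·.1)) σ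

/-! Programs. -/

/-- A function declaration `𝒳Π := match_p T { 𝒴Δ ⇒ c; … }` (co)pattern matching on
all xtors of the type it belongs to. -/
structure FunDecl where
  name : XName
  args : Ctx
  cases : List (XName × Ctx × Cmd)

/-- A type declaration `s p type T { 𝒳Δ; … } with f₁ … fₙ`. -/
structure TypeDecl where
  strat : Strategy
  pol : Polarity
  name : TName
  xtors : List (XName × Ctx)
  funs : List FunDecl

/-- A program: a list of type declarations together with a top-level command. -/
structure Program where
  decls : List TypeDecl
  main : Cmd

def Program.findType (P : Program) (T : TName) : Option TypeDecl :=
  P.decls.find? (fun td => td.name = T)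

/-! Typing. -/

mutual
/-- Expression typing `Γ ⊢ e :ᵒ T` (producer/consumer typing). -/
inductive HasTy (P : Program) : Ctx → Expr → Orientation → TName → Prop
  | var : ∀ Γ x o T, Γ.lookup x = some (o, T) → HasTy P Γ (.var x) o T
  | xtor : ∀ Γ td X Δ τ, td ∈ P.decls → (X, Δ) ∈ td.xtors →
      SubstTy P Γ τ Δ → HasTy P Γ (.xtor X τ) td.pol.val td.name
  | fn : ∀ Γ td f τ, td ∈ P.decls → f ∈ td.funs →
      SubstTy P Γ τ f.args → HasTy P Γ (.xtor f.name τ) td.pol.cnt td.name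
  | mtch : ∀ Γ td cases, td ∈ P.decls →
      cases.map (fun cs => (cs.1, eraseCtx cs.2.1)) = td.xtors.map (fun g => (g.1, eraseCtx g.2)) →
      (∀ cs ∈ cases, CmdTy P (cs.2.1 ++ Γ) cs.2.2) →
      HasTy P Γ (.mtch td.pol td.name cases) td.pol.cnt td.name
/-- Substitution typing `Γ ⊢ σ : Δ`. -/
inductive SubstTy (P : Program) : Ctx → List Expr → Ctx → Prop
  | nil : ∀ Γ, SubstTy P Γ [] []
  | cons : ∀ Γ σ Δ e x o T, SubstTy P Γ σ Δ → HasTy P Γ e o T →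
      SubstTy P Γ (e :: σ) ((x, o, T) :: Δ)
/-- Command typing `Γ ⊢ c :cmd`. -/
inductive CmdTy (P : Program) : Ctx → Cmd → Prop
  | cut : ∀ Γ e₁ e₂ T, HasTy P Γ e₁ .prd T → HasTy P Γ e₂ .con T → CmdTy P Γ (.cut e₁ e₂)
  | done : ∀ Γ, CmdTy P Γ .done
end

/-! Operational semantics. -/

/-- One-step reduction of closed commands, relative to a program `P`. -/
inductive Step (P : Program) : Cmd → Cmd → Prop
  | mtch : ∀ X σ T cases Δ c, (X, Δ, c) ∈ cases →
      Step P (.cut (.xtor X σ) (.mtch .dat T cases)) (substCmd (bindArgs Δ σ) c)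
  | comtch : ∀ X σ T cases Δ c, (X, Δ, c) ∈ cases →
      Step P (.cut (.mtch .cod T cases) (.xtor X σ)) (substCmd (bindArgs Δ σ) c)
  | conCall : ∀ td f Y Δ c σ τ, td ∈ P.decls → td.pol = .dat → f ∈ td.funs →
      (Y, Δ, c) ∈ f.cases →
      Step P (.cut (.xtor Y τ) (.xtor f.name σ))
        (substCmd (bindArgs f.args σ) (substCmd (bindArgs Δ τ) c))
  | prdCall : ∀ td f Y Δ c σ τ, td ∈ P.decls → td.pol = .cod → f ∈ td.funs →
      (Y, Δ, c) ∈ f.cases →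
      Step P (.cut (.xtor f.name σ) (.xtor Y τ))
        (substCmd (bindArgs f.args σ) (substCmd (bindArgs Δ τ) c))

/-! Well-formedness of programs. -/

/-- Well-formedness of a function declaration belonging to the type declaration `td`
(rule Wf-Fun): the (co)pattern match is exhaustive, binds exactly the declared
argument contexts, and each case body typechecks. -/
def FunWf (P : Program) (td : TypeDecl) (f : FunDecl) : Prop :=
  f.cases.map (fun cs => (cs.1, cs.2.1)) = td.xtors ∧
  ∀ cs ∈ f.cases, CmdTy P (cs.2.1 ++ f.args) cs.2.2

/-- All names used in a program are unambiguous. -/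
def NamesUnambiguous (P : Program) : Prop :=
  (P.decls.map (·.name)).Nodup ∧
  (P.decls.flatMap (fun td => td.xtors.map (·.1) ++ td.funs.map (·.name))).Nodup

/-- Well-formedness of programs (rules Wf-Prog and Wf-Type). -/
def Program.wf (P : Program) : Prop :=
  NamesUnambiguous P ∧
  (∀ td ∈ P.decls, ∀ f ∈ td.funs, FunWf P td f) ∧
  CmdTy P [] P.main



/-! Auxiliary lemmas for determinism. -/

section Aux
variable {P : Program}

/-- The name segment contributed by a single type declaration. -/
def nameSeg (td : TypeDecl) : List XName :=
  td.xtors.map (·.1) ++ td.funs.map (·.name)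

lemma seg_nodup (hP : NamesUnambiguous P) {td : TypeDecl} (htd : td ∈ P.decls) :
    (nameSeg td).Nodup := by
  have h := hP.2
  have heq : P.decls.flatMap (fun td => td.xtors.map (·.1) ++ td.funs.map (·.name))
      = (P.decls.map nameSeg).flatten := rfl
  rw [heq, List.nodup_flatten] at h
  exact h.1 _ (List.mem_map_of_mem htd)

lemma seg_disjoint (hP : NamesUnambiguous P) {td td' : TypeDecl}
    (htd : td ∈ P.decls) (htd' : td' ∈ P.decls) (hne : td ≠ td') :
    List.Disjoint (nameSeg td) (nameSeg td') := by
  have h := hP.2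
  have heq : P.decls.flatMap (fun td => td.xtors.map (·.1) ++ td.funs.map (·.name))
      = (P.decls.map nameSeg).flatten := rfl
  rw [heq, List.nodup_flatten] at h
  have hpair : List.Pairwise (fun a b : TypeDecl => List.Disjoint (nameSeg a) (nameSeg b))
      P.decls := (List.pairwise_map).mp h.2
  haveI : Std.Symm (fun a b : TypeDecl => List.Disjoint (nameSeg a) (nameSeg b)) :=
    ⟨fun _ _ h => h.symm⟩
  exact hpair.forall htd htd' hne

lemma fun_name_unique (hP : NamesUnambiguous P) {td td' : TypeDecl} {f f' : FunDecl}
    (htd : td ∈ P.decls) (htd' : td' ∈ P.decls)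
    (hf : f ∈ td.funs) (hf' : f' ∈ td'.funs) (hname : f.name = f'.name) :
    td = td' ∧ f = f' := by
  have hm : f.name ∈ nameSeg td :=
    List.mem_append_right _ (List.mem_map_of_mem hf)
  have hm' : f'.name ∈ nameSeg td' :=
    List.mem_append_right _ (List.mem_map_of_mem hf')
  have heq : td = td' := by
    by_contra hne
    exact seg_disjoint hP htd htd' hne hm (hname ▸ hm')
  subst heq
  refine ⟨rfl, ?_⟩
  have hnd := seg_nodup hP htd
  have hfn : (td.funs.map (·.name)).Nodup := (List.nodup_append.mp hnd).2.1
  exact List.inj_on_of_nodup_map hfn hf hf' hname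

lemma fun_xtor_clash (hP : NamesUnambiguous P) {td td' : TypeDecl} {f : FunDecl}
    {X : XName} {Δ : Ctx}
    (htd : td ∈ P.decls) (htd' : td' ∈ P.decls)
    (hf : f ∈ td.funs) (hx : (X, Δ) ∈ td'.xtors) (hname : f.name = X) : False := by
  have hm : f.name ∈ nameSeg td :=
    List.mem_append_right _ (List.mem_map_of_mem hf)
  have hm' : X ∈ td'.xtors.map (·.1) := List.mem_map_of_mem hx
  by_cases heq : td = td'
  · subst heq
    have hnd := seg_nodup hP htd
    have hdisj : List.Disjoint (td.xtors.map (·.1)) (td.funs.map (·.name)) :=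
      (List.nodup_append'.mp hnd).2.2
    exact hdisj (hname ▸ hm') (List.mem_map_of_mem hf)
  · exact seg_disjoint hP htd htd' heq hm (List.mem_append_left _ (hname ▸ hm'))

lemma xtor_names_nodup (hP : NamesUnambiguous P) {td : TypeDecl} (htd : td ∈ P.decls) :
    (td.xtors.map (·.1)).Nodup :=
  (List.nodup_append.mp (seg_nodup hP htd)).1

/-- Uniqueness of a case in the branches of a (co)pattern match whose branch names
agree with the xtors of a declared type. -/
lemma case_unique {names : List XName} {cases : List (XName × Ctx × Cmd)}
    (hnames : cases.map (·.1) = names) (hnd : names.Nodup)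
    {X : XName} {Δ Δ' : Ctx} {c c' : Cmd}
    (h1 : (X, Δ, c) ∈ cases) (h2 : (X, Δ', c') ∈ cases) :
    Δ = Δ' ∧ c = c' := by
  have hnd' : (cases.map (·.1)).Nodup := hnames ▸ hnd
  have h := List.inj_on_of_nodup_map hnd' h1 h2 rfl
  exact ⟨congrArg (fun p => p.2.1) h, congrArg (fun p => p.2.2) h⟩

/-- Inversion of typing for a (co)pattern match expression. -/
lemma mtch_inv {Γ : Ctx} {e : Expr} {o : Orientation} {T' : TName}
    (h : HasTy P Γ e o T') {p : Polarity} {T : TName}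
    {cases : List (XName × Ctx × Cmd)} (he : e = .mtch p T cases) :
    ∃ td ∈ P.decls,
      cases.map (fun cs => (cs.1, eraseCtx cs.2.1))
        = td.xtors.map (fun g => (g.1, eraseCtx g.2)) := by
  cases h with
  | var => exact absurd he (by simp)
  | xtor => exact absurd he (by simp)
  | fn => exact absurd he (by simp)
  | mtch Γ td cases' htd hcase _ =>
    injection he with _ _ hcs
    exact ⟨td, htd, hcs ▸ hcase⟩

/-- Inversion of a reduction step on a cut of two xtors. -/
lemma step_cut_xtor_inv {Y Z : XName} {τ σ : List Expr} {c' : Cmd}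
    (h : Step P (.cut (.xtor Y τ) (.xtor Z σ)) c') :
    ∃ td f, td ∈ P.decls ∧ f ∈ td.funs ∧
      ((td.pol = .dat ∧ f.name = Z ∧ ∃ Δ cc, (Y, Δ, cc) ∈ f.cases ∧
          c' = substCmd (bindArgs f.args σ) (substCmd (bindArgs Δ τ) cc)) ∨
       (td.pol = .cod ∧ f.name = Y ∧ ∃ Δ cc, (Z, Δ, cc) ∈ f.cases ∧
          c' = substCmd (bindArgs f.args τ) (substCmd (bindArgs Δ σ) cc))) := by
  cases h with
  | conCall td f Y₀ Δ cc σ₀ τ₀ htd hpol hf hmem =>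
    exact ⟨td, f, htd, hf, .inl ⟨hpol, rfl, Δ, cc, hmem, rfl⟩⟩
  | prdCall td f Y₀ Δ cc σ₀ τ₀ htd hpol hf hmem =>
    exact ⟨td, f, htd, hf, .inr ⟨hpol, rfl, Δ, cc, hmem, rfl⟩⟩

end Aux

/-- **Determinism of reduction** in the CPS fragment: one-step reduction of closed
well-typed commands (with respect to a well-formed program) is deterministic. -/
theorem step_deterministic (P : Program) (hP : P.wf) (c c₁ c₂ : Cmd)
    (hc : CmdTy P [] c) (h₁ : Step P c c₁) (h₂ : Step P c c₂) :
    c₁ = c₂ := by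
  obtain ⟨hNU, hWF, -⟩ := hP
  cases h₁ with
  | mtch X σ T cases Δ c hmem =>
    cases h₂ with
    | mtch X' σ' T' cases' Δ' c' hmem' =>
      cases hc with
      | cut Γ e₁ e₂ T₀ hty1 hty2 =>
        obtain ⟨td, htd, hcase⟩ := mtch_inv hty2 rfl
        have hnames : cases.map (·.1) = td.xtors.map (·.1) := by
          have := congrArg (List.map Prod.fst) hcase
          simpa [Function.comp_def] using this
        obtain ⟨hΔ, hcEq⟩ := case_unique hnames (xtor_names_nodup hNU htd) hmem hmem'
        rw [hΔ, hcEq]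
  | comtch X σ T cases Δ c hmem =>
    cases h₂ with
    | comtch X' σ' T' cases' Δ' c' hmem' =>
      cases hc with
      | cut Γ e₁ e₂ T₀ hty1 hty2 =>
        obtain ⟨td, htd, hcase⟩ := mtch_inv hty1 rfl
        have hnames : cases.map (·.1) = td.xtors.map (·.1) := by
          have := congrArg (List.map Prod.fst) hcase
          simpa [Function.comp_def] using this
        obtain ⟨hΔ, hcEq⟩ := case_unique hnames (xtor_names_nodup hNU htd) hmem hmem'
        rw [hΔ, hcEq]
  | conCall td f Y Δ c σ τ htd hpol hf hmem =>
    obtain ⟨td', f', htd', hf', hcase⟩ := step_cut_xtor_inv h₂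
    rcases hcase with ⟨hpol', hname, Δ', cc, hmem', rfl⟩ | ⟨hpol', hname, Δ', cc, hmem', rfl⟩
    · obtain ⟨rfl, rfl⟩ := fun_name_unique hNU htd' htd hf' hf hname
      have hwf := hWF td' htd' f' hf'
      have hnames : f'.cases.map (·.1) = td'.xtors.map (·.1) := by
        have := congrArg (List.map Prod.fst) hwf.1
        simpa [Function.comp_def] using this
      obtain ⟨hΔ, hcEq⟩ := case_unique hnames (xtor_names_nodup hNU htd') hmem hmem'
      rw [hΔ, hcEq]
    · exfalso
      have hwf' := hWF td' htd' f' hf'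
      have hx0 : (f.name, Δ') ∈ f'.cases.map (fun cs => (cs.1, cs.2.1)) :=
        List.mem_map_of_mem hmem'
      rw [hwf'.1] at hx0
      exact fun_xtor_clash hNU htd htd' hf hx0 rfl
  | prdCall td f Y Δ c σ τ htd hpol hf hmem =>
    obtain ⟨td', f', htd', hf', hcase⟩ := step_cut_xtor_inv h₂
    rcases hcase with ⟨hpol', hname, Δ', cc, hmem', rfl⟩ | ⟨hpol', hname, Δ', cc, hmem', rfl⟩
    · exfalso
      have hwf' := hWF td' htd' f' hf'
      have hx0 : (f.name, Δ') ∈ f'.cases.map (fun cs => (cs.1, cs.2.1)) :=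
        List.mem_map_of_mem hmem'
      rw [hwf'.1] at hx0
      exact fun_xtor_clash hNU htd htd' hf hx0 rfl
    · obtain ⟨rfl, rfl⟩ := fun_name_unique hNU htd' htd hf' hf hname
      have hwf := hWF td' htd' f' hf'
      have hnames : f'.cases.map (·.1) = td'.xtors.map (·.1) := by
        have := congrArg (List.map Prod.fst) hwf.1
        simpa [Function.comp_def] using this
      obtain ⟨hΔ, hcEq⟩ := case_unique hnames (xtor_names_nodup hNU htd') hmem hmem'
      rw [hΔ, hcEq]

end SymCalc
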